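/- Let F be a field. With D and ∼ as above, and operations ⊕ and ⊙ defined on D by transporting via the isomorphisms f to a common column and using Maltsev's addition and multiplication, the quotient (D, ⊕, ⊙)/∼ is a field isomorphic to F. -/

import Mathlib

/-- The Heisenberg group over a field `F`: 3×3 upper unitriangular matrices,
represented by their entries `a` at (1,2), `b` at (2,3), `c` at (1,3),
with multiplication induced by matrix multiplication. -/
@[ext] structure Heis (F : Type*) [Field F] where
  a : F
  b : F
  c : F

namespace Heis

variable {F : Type*} [Field F]

instance : Mul (Heis F) := ⟨fun x y => ⟨x.a + y.a, x.b + y.b, x.c + y.c + x.a * y.b⟩⟩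
instance : One (Heis F) := ⟨⟨0, 0, 0⟩⟩
instance : Inv (Heis F) := ⟨fun x => ⟨-x.a, -x.b, x.a * x.b - x.c⟩⟩

@[simp] theorem mul_a (x y : Heis F) : (x * y).a = x.a + y.a := rfl
@[simp] theorem mul_b (x y : Heis F) : (x * y).b = x.b + y.b := rfl
@[simp] theorem mul_c (x y : Heis F) : (x * y).c = x.c + y.c + x.a * y.b := rfl
@[simp] theorem one_a : (1 : Heis F).a = 0 := rfl
@[simp] theorem one_b : (1 : Heis F).b = 0 := rfl
@[simp] theorem one_c : (1 : Heis F).c = 0 := rfl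
@[simp] theorem inv_a (x : Heis F) : (x⁻¹).a = -x.a := rfl
@[simp] theorem inv_b (x : Heis F) : (x⁻¹).b = -x.b := rfl
@[simp] theorem inv_c (x : Heis F) : (x⁻¹).c = x.a * x.b - x.c := rfl

instance : Group (Heis F) where
  mul_assoc x y z := by ext <;> simp <;> ring
  one_mul x := by ext <;> simp
  mul_one x := by ext <;> simp
  inv_mul_cancel x := by ext <;> simp <;> ring

/-- `h a b c` is the unitriangular matrix with superdiagonal entries `a`, `b`
and corner entry `c`. -/
def h (a b c : F) : Heis F := ⟨a, b, c⟩

/-- `Δ u v = u₁v₂ - u₂v₁`. -/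
def Δ (u v : Heis F) : F := u.a * v.b - u.b * v.a

end Heis


namespace Heis

variable {F : Type*} [Field F]

/-- Maltsev's multiplication relation on the center, with parameters `u`, `v`:
`MulR u v x y z` holds iff there exist `x'`, `y'` with `[x',u] = [y',v] = 1`,
`[x',v] = x`, `[u,y'] = y`, and `[x',y'] = z`. -/
def MulR (u v x y z : Heis F) : Prop :=
  ∃ x' y' : Heis F,
    x'⁻¹ * u⁻¹ * x' * u = 1 ∧
    y'⁻¹ * v⁻¹ * y' * v = 1 ∧
    x'⁻¹ * v⁻¹ * x' * v = x ∧
    u⁻¹ * y'⁻¹ * u * y' = y ∧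
    x'⁻¹ * y'⁻¹ * x' * y' = z

/-- `g u v : F → Z(H(F))`, the map `α ↦ h 0 0 (α·Δ u v)`. -/
def g (u v : Heis F) (α : F) : Heis F := h 0 0 (α * Δ u v)

/-- The canonical isomorphism `f_{(u,v),(u',v')} = g_{(u',v')} ∘ g_{(u,v)}⁻¹`
between the Maltsev copies of `F` (for `x` in the center, `g_{(u,v)}⁻¹ x = x.c / Δ u v`). -/
def f (u v u' v' : Heis F) (x : Heis F) : Heis F := g u' v' (x.c / Δ u v)

end Heis

namespace Heis

variable {F : Type*} [Field F]

lemma comm_eq (p q : Heis F) : p⁻¹ * q⁻¹ * p * q = ⟨0, 0, Δ p q⟩ := by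
  ext <;> simp [Δ] <;> ring

lemma center_iff (x : Heis F) : x ∈ Subgroup.center (Heis F) ↔ x.a = 0 ∧ x.b = 0 := by
  rw [Subgroup.mem_center_iff]
  constructor
  · intro hx
    have h1 := congrArg Heis.c (hx ⟨0, 1, 0⟩)
    have h2 := congrArg Heis.c (hx ⟨1, 0, 0⟩)
    simp at h1 h2
    exact ⟨h1, h2⟩
  · rintro ⟨ha, hb⟩ g
    ext <;> simp [ha, hb] <;> ring

lemma delta_ne {u v : Heis F} (hc : u * v ≠ v * u) : Δ u v ≠ 0 := by
  intro hΔ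
  have hΔ' : u.a * v.b - u.b * v.a = 0 := hΔ
  refine hc ?_
  ext
  · simp; ring
  · simp; ring
  · simp
    linear_combination hΔ'

lemma delta_self (u : Heis F) : Δ u u = 0 := by simp only [Δ]; ring

lemma delta_smul_left (c : F) (u v : Heis F) :
    Δ (⟨c * u.a, c * u.b, 0⟩ : Heis F) v = c * Δ u v := by simp only [Δ]; ring

lemma delta_smul_right (c : F) (u v : Heis F) :
    Δ u (⟨c * v.a, c * v.b, 0⟩ : Heis F) = c * Δ u v := by simp only [Δ]; ring

end Heis

open Heis
/-- The quotient of `D = {(u,v,x) : uv ≠ vu, x central}` by `∼`, with the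
transported operations `⊕` and `⊙`, is a field isomorphic to `F`: there is a
map `π` from `D` onto `F` whose fibers are exactly the `∼`-classes and which
carries `⊕` and `⊙` to addition and multiplication of `F`. -/
theorem heis_quotient_iso_field (F : Type*) [Field F] :
    let D : Set (Heis F × Heis F × Heis F) :=
      {t | t.1 * t.2.1 ≠ t.2.1 * t.1 ∧ t.2.2 ∈ Subgroup.center (Heis F)}
    let R : (Heis F × Heis F × Heis F) → (Heis F × Heis F × Heis F) → Prop :=
      fun t s => f t.1 t.2.1 s.1 s.2.1 t.2.2 = s.2.2
    let plus : (Heis F × Heis F × Heis F) → (Heis F × Heis F × Heis F) →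
        (Heis F × Heis F × Heis F) → Prop :=
      fun t s w => ∃ y z : Heis F,
        R (t.1, t.2.1, y) s ∧ R (t.1, t.2.1, z) w ∧ t.2.2 * y = z
    let times : (Heis F × Heis F × Heis F) → (Heis F × Heis F × Heis F) →
        (Heis F × Heis F × Heis F) → Prop :=
      fun t s w => ∃ y z : Heis F,
        R (t.1, t.2.1, y) s ∧ R (t.1, t.2.1, z) w ∧ MulR t.1 t.2.1 t.2.2 y z
    ∃ π : (Heis F × Heis F × Heis F) → F,
      (∀ α : F, ∃ t ∈ D, π t = α) ∧
      (∀ t ∈ D, ∀ s ∈ D, (R t s ↔ π t = π s)) ∧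
      (∀ t ∈ D, ∀ s ∈ D, ∀ w ∈ D, (plus t s w ↔ π w = π t + π s)) ∧
      (∀ t ∈ D, ∀ s ∈ D, ∀ w ∈ D, (times t s w ↔ π w = π t * π s)) := by
  intro D R plus times
  refine ⟨fun t => t.2.2.c / Δ t.1 t.2.1, ?_, ?_, ?_, ?_⟩
  · -- surjectivity
    intro α
    refine ⟨(⟨1, 0, 0⟩, ⟨0, 1, 0⟩, ⟨0, 0, α⟩), ⟨?_, ?_⟩, ?_⟩
    · intro hcomm
      have := congrArg Heis.c hcomm
      simp at this
    · rw [center_iff]; exact ⟨rfl, rfl⟩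
    · simp [Δ]
  · -- R iff π equal
    rintro ⟨u, v, x⟩ ⟨hD, hx⟩ ⟨u', v', x'⟩ ⟨hD', hx'⟩
    have hΔ' : Δ u' v' ≠ 0 := delta_ne hD'
    obtain ⟨ha', hb'⟩ := (center_iff x').mp hx'
    show f u v u' v' x = x' ↔ x.c / Δ u v = x'.c / Δ u' v'
    have step : f u v u' v' x = x' ↔ (x.c / Δ u v) * Δ u' v' = x'.c := by
      rw [Heis.ext_iff]
      simp [f, g, h, ha', hb']
    rw [step, eq_div_iff hΔ']
  · -- plus
    rintro ⟨u, v, x⟩ ⟨hD, hx⟩ ⟨us, vs, xs⟩ ⟨hDs, hxs⟩ ⟨uw, vw, xw⟩ ⟨hDw, hxw⟩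
    have hΔ : Δ u v ≠ 0 := delta_ne hD
    have hΔs : Δ us vs ≠ 0 := delta_ne hDs
    have hΔw : Δ uw vw ≠ 0 := delta_ne hDw
    obtain ⟨hxa, hxb⟩ := (center_iff x).mp hx
    obtain ⟨hsa, hsb⟩ := (center_iff xs).mp hxs
    obtain ⟨hwa, hwb⟩ := (center_iff xw).mp hxw
    constructor
    · rintro ⟨y, z, hy, hz, hxyz⟩
      have hyc : (y.c / Δ u v) * Δ us vs = xs.c := by
        simpa [f, g, h] using congrArg Heis.c hy
      have hzc : (z.c / Δ u v) * Δ uw vw = xw.c := by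
        simpa [f, g, h] using congrArg Heis.c hz
      have hc : x.c + y.c = z.c := by
        simpa [hxa] using congrArg Heis.c hxyz
      have hy' : y.c / Δ u v = xs.c / Δ us vs := (eq_div_iff hΔs).mpr hyc
      have hz' : z.c / Δ u v = xw.c / Δ uw vw := (eq_div_iff hΔw).mpr hzc
      show xw.c / Δ uw vw = x.c / Δ u v + xs.c / Δ us vs
      rw [← hy', ← hz', ← hc, add_div]
    · intro hw
      replace hw : xw.c / Δ uw vw = x.c / Δ u v + xs.c / Δ us vs := hw
      refine ⟨⟨0, 0, (xs.c / Δ us vs) * Δ u v⟩, ⟨0, 0, (xw.c / Δ uw vw) * Δ u v⟩,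
        ?_, ?_, ?_⟩
      · show f u v us vs _ = xs
        ext
        · simp [f, g, h, hsa]
        · simp [f, g, h, hsb]
        · simp only [f, g, h]
          rw [mul_div_assoc, div_self hΔ, mul_one, div_mul_cancel₀ _ hΔs]
      · show f u v uw vw _ = xw
        ext
        · simp [f, g, h, hwa]
        · simp [f, g, h, hwb]
        · simp only [f, g, h]
          rw [mul_div_assoc, div_self hΔ, mul_one, div_mul_cancel₀ _ hΔw]
      · ext
        · simp [hxa]
        · simp [hxb]
        · simp only [mul_c, hxa, zero_mul, add_zero]
          rw [hw, add_mul, div_mul_cancel₀ _ hΔ]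
  · -- times
    rintro ⟨u, v, x⟩ ⟨hD, hx⟩ ⟨us, vs, xs⟩ ⟨hDs, hxs⟩ ⟨uw, vw, xw⟩ ⟨hDw, hxw⟩
    have hΔ : Δ u v ≠ 0 := delta_ne hD
    have hΔs : Δ us vs ≠ 0 := delta_ne hDs
    have hΔw : Δ uw vw ≠ 0 := delta_ne hDw
    obtain ⟨hxa, hxb⟩ := (center_iff x).mp hx
    obtain ⟨hsa, hsb⟩ := (center_iff xs).mp hxs
    obtain ⟨hwa, hwb⟩ := (center_iff xw).mp hxw
    constructor
    · rintro ⟨y, z, hy, hz, x', y', h1, h2, h3, h4, h5⟩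
      rw [comm_eq] at h1 h2 h3 h4 h5
      have e1 : Δ x' u = 0 := by simpa using congrArg Heis.c h1
      have e2 : Δ y' v = 0 := by simpa using congrArg Heis.c h2
      have e3 : Δ x' v = x.c := congrArg Heis.c h3
      have e4 : Δ u y' = y.c := congrArg Heis.c h4
      have e5 : Δ x' y' = z.c := congrArg Heis.c h5
      have hyc : (y.c / Δ u v) * Δ us vs = xs.c := by
        simpa [f, g, h] using congrArg Heis.c hy
      have hzc : (z.c / Δ u v) * Δ uw vw = xw.c := by
        simpa [f, g, h] using congrArg Heis.c hz
      have hy' : y.c / Δ u v = xs.c / Δ us vs := (eq_div_iff hΔs).mpr hyc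
      have hz' : z.c / Δ u v = xw.c / Δ uw vw := (eq_div_iff hΔw).mpr hzc
      have pl : Δ x' v * Δ u y' = Δ x' u * Δ v y' + Δ x' y' * Δ u v := by
        simp only [Δ]; ring
      have key : x.c * y.c = z.c * Δ u v := by
        rw [← e3, ← e4, ← e5, pl, e1]; ring
      show xw.c / Δ uw vw = x.c / Δ u v * (xs.c / Δ us vs)
      rw [← hy', ← hz']
      field_simp
      linear_combination -key
    · intro hw
      replace hw : xw.c / Δ uw vw = x.c / Δ u v * (xs.c / Δ us vs) := hw
      refine ⟨⟨0, 0, (xs.c / Δ us vs) * Δ u v⟩, ⟨0, 0, (xw.c / Δ uw vw) * Δ u v⟩,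
        ?_, ?_, ?_⟩
      · show f u v us vs _ = xs
        ext
        · simp [f, g, h, hsa]
        · simp [f, g, h, hsb]
        · simp only [f, g, h]
          rw [mul_div_assoc, div_self hΔ, mul_one, div_mul_cancel₀ _ hΔs]
      · show f u v uw vw _ = xw
        ext
        · simp [f, g, h, hwa]
        · simp [f, g, h, hwb]
        · simp only [f, g, h]
          rw [mul_div_assoc, div_self hΔ, mul_one, div_mul_cancel₀ _ hΔw]
      · refine ⟨⟨(x.c / Δ u v) * u.a, (x.c / Δ u v) * u.b, 0⟩,
          ⟨(xs.c / Δ us vs) * v.a, (xs.c / Δ us vs) * v.b, 0⟩, ?_, ?_, ?_, ?_, ?_⟩ <;>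
          rw [comm_eq]
        · ext
          · rfl
          · rfl
          · show Δ _ u = (0 : F)
            rw [delta_smul_left, delta_self, mul_zero]
        · ext
          · rfl
          · rfl
          · show Δ _ v = (0 : F)
            rw [delta_smul_left, delta_self, mul_zero]
        · ext
          · exact hxa.symm
          · exact hxb.symm
          · show Δ _ v = x.c
            rw [delta_smul_left, div_mul_cancel₀ _ hΔ]
        · ext
          · rfl
          · rfl
          · show Δ u _ = (xs.c / Δ us vs) * Δ u v
            rw [delta_smul_right]
        · ext
          · rfl
          · rfl
          · show Δ _ _ = (xw.c / Δ uw vw) * Δ u v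
            rw [delta_smul_left, delta_smul_right, hw]; ring
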